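/- arXiv:2106.11675 — 2 statements merged into one kernel-verified Lean document; each statement's English description precedes it below -/
import Mathlib

section
/- Let G be a finite simple graph, let z ≥ 0 be an integer, and let C₁, F₁, …, C_ℓ, F_ℓ be a z-antler-sequence for G. Then for every 1 ≤ i ≤ ℓ, the pair (C₁ ∪ ⋯ ∪ C_i, F₁ ∪ ⋯ ∪ F_i) is a z-antler in G. -/
variable {V : Type*}

/-- The subgraph of `G` with edges restricted to the vertex set `S`
(kept on the same vertex type; vertices outside `S` become isolated).
Used to model the induced subgraph `G[S]` and vertex deletion `G - X = G[Xᶜ]`. -/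
def graphRestrict (G : SimpleGraph V) (S : Set V) : SimpleGraph V where
  Adj u v := G.Adj u v ∧ u ∈ S ∧ v ∈ S
  symm := ⟨fun _ _ h => ⟨h.1.symm, h.2.2, h.2.1⟩⟩
  loopless := ⟨fun v h => G.loopless.irrefl v h.1⟩

/-- `X` is a feedback vertex set of `G`: deleting `X` leaves an acyclic graph. -/
def IsFVS (G : SimpleGraph V) (X : Set V) : Prop :=
  (graphRestrict G Xᶜ).IsAcyclic

/-- The feedback vertex number of `G`: the minimum size of a feedback vertex set. -/
noncomputable def fvs (G : SimpleGraph V) : ℕ :=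
  sInf {n | ∃ X : Set V, IsFVS G X ∧ X.ncard = n}

/-- `X` is a minimum feedback vertex set of `G`. -/
def IsMinFVS (G : SimpleGraph V) (X : Set V) : Prop :=
  IsFVS G X ∧ ∀ Y : Set V, IsFVS G Y → X.ncard ≤ Y.ncard

/-- `(C, F)` is a feedback vertex cut in `G`: `C` and `F` are disjoint, `G[F]` is a
forest, and every tree of `G[F]` has at most one edge to `V(G) \ (C ∪ F)` (i.e. any two
edges from the same component of `G[F]` to the outside coincide). -/
def IsFVC (G : SimpleGraph V) (C F : Set V) : Prop :=
  Disjoint C F ∧ (graphRestrict G F).IsAcyclic ∧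
    ∀ u₁ u₂ w₁ w₂ : V, u₁ ∈ F → u₂ ∈ F →
      (graphRestrict G F).Reachable u₁ u₂ →
      w₁ ∉ C ∪ F → w₂ ∉ C ∪ F → G.Adj u₁ w₁ → G.Adj u₂ w₂ →
      u₁ = u₂ ∧ w₁ = w₂

/-- `(C, F)` is an antler in `G`: a feedback vertex cut with `|C| ≤ fvs(G[C ∪ F])`. -/
def IsAntler (G : SimpleGraph V) (C F : Set V) : Prop :=
  IsFVC G C F ∧ C.ncard ≤ fvs (graphRestrict G (C ∪ F))

/-- A graph `H` together with a vertex set `C` "has order `z`" if every connected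
component `H'` of `H` satisfies `fvs(H') = |C ∩ V(H')| ≤ z`. -/
def HasCertOrder {W : Type*} (H : SimpleGraph W) (C : Set W) (z : ℕ) : Prop :=
  ∀ v : W,
    fvs (graphRestrict H {u | H.Reachable u v}) = (C ∩ {u | H.Reachable u v}).ncard ∧
    (C ∩ {u | H.Reachable u v}).ncard ≤ z

/-- `H` is a `C`-certificate in `G`: a subgraph of `G` for which `C` is a minimum
feedback vertex set. -/
def IsCCertificate (G : SimpleGraph V) (C : Set V) (H : G.Subgraph) : Prop :=
  C ⊆ H.verts ∧ IsMinFVS H.coe {u : H.verts | (u : V) ∈ C}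

/-- `H` is a `C`-certificate of order `z` in `G`. -/
def IsCCertificateOfOrder (G : SimpleGraph V) (C : Set V) (H : G.Subgraph) (z : ℕ) : Prop :=
  IsCCertificate G C H ∧ HasCertOrder H.coe {u : H.verts | (u : V) ∈ C} z

/-- `(C, F)` is a `z`-antler in `G`: an antler such that `G[C ∪ F]` contains a
`C`-certificate of order `z`. -/
def IsZAntler (G : SimpleGraph V) (z : ℕ) (C F : Set V) : Prop :=
  IsAntler G C F ∧ ∃ H : G.Subgraph, H.verts ⊆ C ∪ F ∧ IsCCertificateOfOrder G C H z

/-- The function `f_r(x) = 2x³ + 3x² - x`. -/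
def fr (x : ℕ) : ℕ := 2 * x ^ 3 + 3 * x ^ 2 - x

/-- A feedback vertex cut `(C, F)` is reducible if `|F| > f_r(|C|)`. -/
def IsReducibleFVC (G : SimpleGraph V) (C F : Set V) : Prop :=
  IsFVC G C F ∧ fr C.ncard < F.ncard

/-- A feedback vertex cut `(C, F)` is simple if `|F| ≤ 2 f_r(|C|)` and either
`G[F]` is connected, or all trees of `G[F]` have a common neighbor `v` and there is a
single-tree feedback vertex cut `(C, F₂)` with `v ∈ F₂ \ F` and `F ⊆ F₂`. -/
def IsSimpleFVC (G : SimpleGraph V) (C F : Set V) : Prop :=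
  IsFVC G C F ∧ F.ncard ≤ 2 * fr C.ncard ∧
    ((G.induce F).Connected ∨
      ∃ v : V,
        (∀ u ∈ F, ∃ u' ∈ F, (graphRestrict G F).Reachable u u' ∧ G.Adj u' v) ∧
        ∃ F₂ : Set V, IsFVC G C F₂ ∧ (G.induce F₂).Connected ∧ v ∈ F₂ \ F ∧ F ⊆ F₂)

/-- `G` contains a `v`-flower of order `k`: `k` cycles whose vertex sets pairwise
intersect exactly in `{v}`. -/
def HasFlower (G : SimpleGraph V) (v : V) (k : ℕ) : Prop :=
  ∃ c : Fin k → G.Walk v v,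
    (∀ i, (c i).IsCycle) ∧
    ∀ i j, i ≠ j → {x | x ∈ (c i).support} ∩ {x | x ∈ (c j).support} = {v}

/-- `G` contains `k` pairwise vertex-disjoint cycles. -/
def HasDisjointCycles (G : SimpleGraph V) (k : ℕ) : Prop :=
  ∃ (b : Fin k → V) (c : ∀ i, G.Walk (b i) (b i)),
    (∀ i, (c i).IsCycle) ∧
    ∀ i j, i ≠ j → Disjoint {x | x ∈ (c i).support} {x | x ∈ (c j).support}

/-- `(C, F)` is a 1-antler in `G` (self-contained definition): `G[F]` is a forest,
every tree of `G[F]` has at most one edge to `V(G) \ (C ∪ F)`, and `G[C ∪ F]`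
contains `|C|` pairwise vertex-disjoint cycles. -/
def IsOneAntler (G : SimpleGraph V) (C F : Set V) : Prop :=
  IsFVC G C F ∧ HasDisjointCycles (graphRestrict G (C ∪ F)) C.ncard

/-- `C 1, F 1, …, C ℓ, F ℓ` is a `z`-antler-sequence for `G`: the sets are pairwise
disjoint and each `(C i, F i)` is a `z`-antler in `G` minus all earlier sets. -/
def IsAntlerSeq (G : SimpleGraph V) (z ℓ : ℕ) (C F : Fin ℓ → Set V) : Prop :=
  (∀ i j, i ≠ j → Disjoint (C i) (C j)) ∧
  (∀ i j, i ≠ j → Disjoint (F i) (F j)) ∧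
  (∀ i j, Disjoint (C i) (F j)) ∧
  ∀ i, IsZAntler (graphRestrict G (⋃ j, ⋃ (_ : j < i), (C j ∪ F j))ᶜ) z (C i) (F i)

open SimpleGraph

section Generic

variable {α : Type*} {β : Type*}

lemma acyclic_of_hom_inj {A : SimpleGraph α} {B : SimpleGraph β} (f : A →g B)
    (hf : Function.Injective f) (hB : B.IsAcyclic) : A.IsAcyclic := by
  intro v c hc
  exact hB (c.map f) (hc.map hf)

lemma acyclic_anti {A B : SimpleGraph α} (h : A ≤ B) (hB : B.IsAcyclic) : A.IsAcyclic :=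
  acyclic_of_hom_inj (SimpleGraph.Hom.ofLE h) (fun _ _ e => e) hB

lemma reachable_pullback {A : SimpleGraph α} {B : SimpleGraph β} {f : β → α}
    (hinj : Function.Injective f)
    (h1 : ∀ u v, B.Adj u v ↔ A.Adj (f u) (f v))
    (h2 : ∀ ⦃x y⦄, A.Adj x y → ∃ u, f u = x)
    {u v : β} (h : A.Reachable (f u) (f v)) : B.Reachable u v := by
  obtain ⟨p⟩ := h
  have key : ∀ {x y : α} (_ : A.Walk x y), ∀ u v : β, f u = x → f v = y → B.Reachable u v := by
    intro x y p
    induction p with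
    | nil =>
      intro u v hu hv
      cases hinj (hu.trans hv.symm)
      exact Reachable.refl _
    | @cons a c b h q ih =>
      intro u v hu hv
      obtain ⟨w, hw⟩ := h2 h.symm
      refine Reachable.trans ?_ (ih w v hw hv)
      exact ((h1 u w).2 (by rw [hu, hw]; exact h)).reachable
  exact key p u v rfl rfl

lemma acyclic_pullback_iff {A : SimpleGraph α} {B : SimpleGraph β} {f : β → α}
    (hinj : Function.Injective f)
    (h1 : ∀ u v, B.Adj u v ↔ A.Adj (f u) (f v))
    (h2 : ∀ ⦃x y⦄, A.Adj x y → ∃ u, f u = x) :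
    A.IsAcyclic ↔ B.IsAcyclic := by
  have hsym2 : ∀ (a b u v : β), (s(f a, f b) : Sym2 α) = s(f u, f v) → (s(a,b) : Sym2 β) = s(u,v) := by
    intro a b u v hs
    apply Sym2.map.injective hinj
    rwa [Sym2.map_pair_eq, Sym2.map_pair_eq]
  constructor
  · intro hA
    rw [isAcyclic_iff_forall_adj_isBridge] at hA ⊢
    intro u v huv
    have hbr := hA ((h1 u v).1 huv)
    rw [isBridge_iff] at hbr ⊢
    refine fun hr => hbr ?_
    refine Reachable.map ⟨f, ?_⟩ hr
    intro a b hab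
    simp only [deleteEdges] at hab ⊢
    rw [sdiff_adj, fromEdgeSet_adj] at hab ⊢
    refine ⟨(h1 a b).1 hab.1, fun hcon => hab.2 ⟨?_, hab.1.ne⟩⟩
    have := hcon.1
    simp only [Set.mem_singleton_iff] at this ⊢
    exact hsym2 a b u v this
  · intro hB
    rw [isAcyclic_iff_forall_adj_isBridge] at hB ⊢
    intro x y hxy
    obtain ⟨u, rfl⟩ := h2 hxy
    obtain ⟨v, rfl⟩ := h2 hxy.symm
    have hbr := hB ((h1 u v).2 hxy)
    rw [isBridge_iff] at hbr ⊢
    refine fun hr => hbr ?_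
    refine reachable_pullback hinj ?_ ?_ hr
    · intro a b
      simp only [deleteEdges]
      rw [sdiff_adj, sdiff_adj, fromEdgeSet_adj, fromEdgeSet_adj]
      constructor
      · rintro ⟨hab, hne⟩
        refine ⟨(h1 a b).1 hab, fun hcon => hne ⟨?_, hab.ne⟩⟩
        simp only [Set.mem_singleton_iff] at hcon ⊢
        exact hsym2 a b u v hcon.1
      · rintro ⟨hab, hne⟩
        refine ⟨(h1 a b).2 hab, fun hcon => hne ⟨?_, hab.ne⟩⟩
        simp only [Set.mem_singleton_iff] at hcon ⊢
        simpa [Sym2.map_pair_eq] using congrArg (Sym2.map f) hcon.1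
    · rintro a b ⟨hab, -⟩
      exact h2 hab

lemma isFVS_univ {A : SimpleGraph α} : IsFVS A Set.univ := by
  intro v c hc
  cases c with
  | nil => exact hc.ne_nil rfl
  | cons h q => exact h.2.1 trivial

lemma fvs_exists_min (A : SimpleGraph α) : ∃ X : Set α, IsFVS A X ∧ X.ncard = fvs A := by
  have hne : {n | ∃ X : Set α, IsFVS A X ∧ X.ncard = n}.Nonempty :=
    ⟨Set.univ.ncard, Set.univ, isFVS_univ, rfl⟩
  exact Nat.sInf_mem hne

lemma fvs_le_ncard {A : SimpleGraph α} {X : Set α} (hX : IsFVS A X) : fvs A ≤ X.ncard := by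
  have hmem : X.ncard ∈ {n | ∃ X : Set α, IsFVS A X ∧ X.ncard = n} := ⟨X, hX, rfl⟩
  exact Nat.sInf_le hmem

lemma isFVS_anti {A B : SimpleGraph α} (h : A ≤ B) {X : Set α} (hX : IsFVS B X) : IsFVS A X := by
  refine acyclic_anti ?_ hX
  intro u v hu
  exact ⟨h hu.1, hu.2⟩

lemma fvs_mono {A B : SimpleGraph α} (h : A ≤ B) : fvs A ≤ fvs B := by
  obtain ⟨X, hX, hcard⟩ := fvs_exists_min B
  exact hcard ▸ fvs_le_ncard (isFVS_anti h hX)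

lemma isMinFVS_fvs {A : SimpleGraph α} {X : Set α} (h : IsMinFVS A X) : fvs A = X.ncard := by
  refine le_antisymm (fvs_le_ncard h.1) ?_
  obtain ⟨Y, hY, hcard⟩ := fvs_exists_min A
  exact hcard ▸ h.2 Y hY

lemma isFVS_pullback_iff {A : SimpleGraph α} {B : SimpleGraph β} {f : β → α}
    (hinj : Function.Injective f)
    (h1 : ∀ u v, B.Adj u v ↔ A.Adj (f u) (f v))
    (h2 : ∀ ⦃x y⦄, A.Adj x y → ∃ u, f u = x)
    (Y : Set β) : IsFVS B Y ↔ IsFVS A (f '' Y) := by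
  refine (acyclic_pullback_iff hinj ?_ ?_).symm
  · intro u v
    constructor
    · rintro ⟨hadj, hu, hv⟩
      exact ⟨(h1 u v).1 hadj, fun hc => hu ((hinj.mem_set_image).1 hc),
        fun hc => hv ((hinj.mem_set_image).1 hc)⟩
    · rintro ⟨hadj, hu, hv⟩
      exact ⟨(h1 u v).2 hadj, fun hc => hu ((hinj.mem_set_image).2 hc),
        fun hc => hv ((hinj.mem_set_image).2 hc)⟩
  · rintro x y ⟨hadj, -, -⟩
    exact h2 hadj

lemma fvs_pullback_eq [Finite α] [Finite β] {A : SimpleGraph α} {B : SimpleGraph β} {f : β → α}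
    (hinj : Function.Injective f)
    (h1 : ∀ u v, B.Adj u v ↔ A.Adj (f u) (f v))
    (h2 : ∀ ⦃x y⦄, A.Adj x y → ∃ u, f u = x) : fvs A = fvs B := by
  apply le_antisymm
  · obtain ⟨Y, hY, hc⟩ := fvs_exists_min B
    calc fvs A ≤ (f '' Y).ncard := fvs_le_ncard ((isFVS_pullback_iff hinj h1 h2 Y).1 hY)
      _ = Y.ncard := Set.ncard_image_of_injective Y hinj
      _ = fvs B := hc
  · obtain ⟨X, hX, hc⟩ := fvs_exists_min A
    have hXr : IsFVS A (X ∩ Set.range f) := by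
      have heq : graphRestrict A (X ∩ Set.range f)ᶜ = graphRestrict A Xᶜ := by
        ext u v
        constructor
        · rintro ⟨h, hu, hv⟩
          exact ⟨h, fun hXu => hu ⟨hXu, h2 h⟩, fun hXv => hv ⟨hXv, h2 h.symm⟩⟩
        · rintro ⟨h, hu, hv⟩
          exact ⟨h, fun hXu => hu hXu.1, fun hXv => hv hXv.1⟩
      unfold IsFVS
      rw [heq]
      exact hX
    have hfvs : IsFVS B (f ⁻¹' X) := by
      rw [isFVS_pullback_iff hinj h1 h2, Set.image_preimage_eq_inter_range]
      exact hXr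
    calc fvs B ≤ (f ⁻¹' X).ncard := fvs_le_ncard hfvs
      _ = (X ∩ Set.range f).ncard := by
          rw [← Set.ncard_image_of_injective _ hinj, Set.image_preimage_eq_inter_range]
      _ ≤ X.ncard := Set.ncard_le_ncard Set.inter_subset_left (Set.toFinite X)
      _ = fvs A := hc

end Generic

section Walks

variable {α : Type*}

lemma restrict_walk_support {G : SimpleGraph α} {S : Set α} {a b : α}
    (p : (graphRestrict G S).Walk a b) (hb : b ∈ S) : ∀ v ∈ p.support, v ∈ S := by
  induction p with
  | nil =>
    intro v hv
    rw [SimpleGraph.Walk.support_nil, List.mem_singleton] at hv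
    subst hv; exact hb
  | cons h q ih =>
    intro v hv
    rw [SimpleGraph.Walk.support_cons, List.mem_cons] at hv
    rcases hv with rfl | hv
    · exact h.2.1
    · exact ih hb v hv

lemma restrict_reachable_mem {G : SimpleGraph α} {S : Set α} {a b : α}
    (h : (graphRestrict G S).Reachable a b) (hb : b ∈ S) : a ∈ S := by
  obtain ⟨p⟩ := h
  exact restrict_walk_support p hb a p.start_mem_support

lemma walk_edges_transfer {A B : SimpleGraph α} {a b : α} (p : A.Walk a b)
    (h : ∀ ⦃x y⦄, A.Adj x y → x ∈ p.support → y ∈ p.support → B.Adj x y) :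
    ∀ e ∈ p.edges, e ∈ B.edgeSet := by
  intro e
  refine Sym2.ind (fun x y he => ?_) e
  exact (SimpleGraph.mem_edgeSet _).2
    (h (p.adj_of_mem_edges he) (p.fst_mem_support_of_mem_edges he)
      (p.snd_mem_support_of_mem_edges he))

lemma sup_walk_in_left {U A B : SimpleGraph α} {S : Set α}
    (hU : ∀ ⦃x y⦄, U.Adj x y → A.Adj x y ∨ B.Adj x y)
    (hA : ∀ ⦃x y⦄, A.Adj x y → x ∈ S ∧ y ∈ S)
    (hB : ∀ ⦃x y⦄, B.Adj x y → x ∉ S) :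
    ∀ {a b : α} (p : U.Walk a b), a ∈ S →
      (∀ v ∈ p.support, v ∈ S) ∧ (∀ e ∈ p.edges, e ∈ A.edgeSet) := by
  intro a b p
  induction p with
  | nil =>
    intro ha
    refine ⟨?_, by simp⟩
    intro v hv
    rw [SimpleGraph.Walk.support_nil, List.mem_singleton] at hv
    subst hv; exact ha
  | @cons a c b h q ih =>
    intro ha
    have hadj : A.Adj a c := by
      rcases hU h with h' | h'
      · exact h'
      · exact absurd ha (hB h')
    obtain ⟨hs, he⟩ := ih (hA hadj).2
    constructor
    · intro v hv
      rw [SimpleGraph.Walk.support_cons, List.mem_cons] at hv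
      rcases hv with rfl | hv
      · exact ha
      · exact hs v hv
    · intro e hee
      rw [SimpleGraph.Walk.edges_cons, List.mem_cons] at hee
      rcases hee with rfl | hee
      · exact (SimpleGraph.mem_edgeSet _).2 hadj
      · exact he e hee

lemma sup_reachable_left {A B : SimpleGraph α} {S : Set α}
    (hA : ∀ ⦃x y⦄, A.Adj x y → x ∈ S ∧ y ∈ S)
    (hB : ∀ ⦃x y⦄, B.Adj x y → x ∉ S)
    {a b : α} (h : (A ⊔ B).Reachable a b) (ha : a ∈ S) : A.Reachable a b := by
  obtain ⟨p⟩ := h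
  have hU : ∀ ⦃x y⦄, (A ⊔ B).Adj x y → A.Adj x y ∨ B.Adj x y :=
    fun x y hxy => (SimpleGraph.sup_adj _ _ _ _).1 hxy
  exact ⟨p.transfer A ((sup_walk_in_left hU hA hB p ha).2)⟩

lemma sup_acyclic_sep {A B : SimpleGraph α} {S : Set α}
    (hA : ∀ ⦃x y⦄, A.Adj x y → x ∈ S ∧ y ∈ S)
    (hB : ∀ ⦃x y⦄, B.Adj x y → x ∉ S ∧ y ∉ S)
    (hAa : A.IsAcyclic) (hBa : B.IsAcyclic) : (A ⊔ B).IsAcyclic := by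
  have hU : ∀ ⦃x y⦄, (A ⊔ B).Adj x y → A.Adj x y ∨ B.Adj x y :=
    fun x y hxy => (SimpleGraph.sup_adj _ _ _ _).1 hxy
  have hU' : ∀ ⦃x y⦄, (A ⊔ B).Adj x y → B.Adj x y ∨ A.Adj x y :=
    fun x y hxy => ((SimpleGraph.sup_adj _ _ _ _).1 hxy).symm
  intro v c hc
  cases c with
  | nil => exact hc.ne_nil rfl
  | @cons a w b h q =>
    rcases (SimpleGraph.sup_adj _ _ _ _).1 h with h' | h'
    · have hcond := (sup_walk_in_left hU hA (fun x y hxy => (hB hxy).1)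
        (SimpleGraph.Walk.cons h q) (hA h').1).2
      exact hAa ((SimpleGraph.Walk.cons h q).transfer A hcond) (hc.transfer hcond)
    · have hB' : ∀ ⦃x y⦄, B.Adj x y → x ∈ Sᶜ ∧ y ∈ Sᶜ :=
        fun x y hxy => ⟨(hB hxy).1, (hB hxy).2⟩
      have hA' : ∀ ⦃x y⦄, A.Adj x y → x ∉ Sᶜ := fun x y hxy hx => hx (hA hxy).1
      have hcond := (sup_walk_in_left hU' hB' hA'
        (SimpleGraph.Walk.cons h q) (hB h').1).2
      exact hBa ((SimpleGraph.Walk.cons h q).transfer B hcond) (hc.transfer hcond)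

lemma exists_cross_edge {A : SimpleGraph α} {S : Set α} :
    ∀ {a b : α} (p : A.Walk a b), a ∉ S → b ∈ S →
      ∃ u w, u ∈ S ∧ w ∉ S ∧ A.Adj u w ∧ s(u, w) ∈ p.edges := by
  intro a b p
  induction p with
  | nil => intro ha hb; exact absurd hb ha
  | @cons a c b h q ih =>
    intro ha hb
    by_cases hc : c ∈ S
    · refine ⟨c, a, hc, ha, h.symm, ?_⟩
      rw [SimpleGraph.Walk.edges_cons, List.mem_cons]
      exact Or.inl (Sym2.eq_swap)
    · obtain ⟨u, w, h1, h2, h3, h4⟩ := ih hc hb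
      exact ⟨u, w, h1, h2, h3, List.mem_cons_of_mem _ h4⟩

end Walks

section SubgraphTransport

variable {α : Type*} {G₀ : SimpleGraph α}

lemma graphRestrict_univ (A : SimpleGraph α) : graphRestrict A Set.univ = A := by
  ext u v
  exact ⟨fun h => h.1, fun h => ⟨h, trivial, trivial⟩⟩

lemma subgraph_h2 (K : G₀.Subgraph) {T : Set α} :
    ∀ ⦃x y⦄, (graphRestrict K.spanningCoe T).Adj x y → ∃ u : K.verts, (u : α) = x :=
  fun x _ h => ⟨⟨x, K.edge_vert h.1⟩, rfl⟩

lemma subgraph_h2' (K : G₀.Subgraph) :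
    ∀ ⦃x y⦄, K.spanningCoe.Adj x y → ∃ u : K.verts, (u : α) = x :=
  fun x _ h => ⟨⟨x, K.edge_vert h⟩, rfl⟩

lemma subgraph_restrict_adj_iff (K : G₀.Subgraph) (S : Set K.verts) (u v : K.verts) :
    (graphRestrict K.coe S).Adj u v ↔
      (graphRestrict K.spanningCoe (Subtype.val '' S)).Adj ↑u ↑v := by
  constructor
  · rintro ⟨h, hu, hv⟩
    exact ⟨h, ⟨u, hu, rfl⟩, ⟨v, hv, rfl⟩⟩
  · rintro ⟨h, hu, hv⟩
    exact ⟨h, (Subtype.val_injective.mem_set_image).1 hu,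
      (Subtype.val_injective.mem_set_image).1 hv⟩

lemma subgraph_fvs_restrict [Finite α] (K : G₀.Subgraph) (S : Set K.verts) :
    fvs (graphRestrict K.coe S) = fvs (graphRestrict K.spanningCoe (Subtype.val '' S)) :=
  (fvs_pullback_eq Subtype.val_injective (subgraph_restrict_adj_iff K S)
    (subgraph_h2 K)).symm

lemma subgraph_isFVS_iff (K : G₀.Subgraph) (Y : Set K.verts) :
    IsFVS K.coe Y ↔ IsFVS K.spanningCoe (Subtype.val '' Y) :=
  isFVS_pullback_iff Subtype.val_injective (fun _ _ => Iff.rfl) (subgraph_h2' K) Y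

lemma subgraph_fvs [Finite α] (K : G₀.Subgraph) : fvs K.coe = fvs K.spanningCoe := by
  have h := subgraph_fvs_restrict K Set.univ
  rw [graphRestrict_univ, Set.image_univ, Subtype.range_coe] at h
  have heq : graphRestrict K.spanningCoe K.verts = K.spanningCoe := by
    ext u v
    exact ⟨fun h' => h'.1, fun h' => ⟨h', K.edge_vert h', K.edge_vert h'.symm⟩⟩
  rwa [heq] at h

lemma subgraph_reach_iff (K : G₀.Subgraph) (u v : K.verts) :
    K.coe.Reachable u v ↔ K.spanningCoe.Reachable ↑u ↑v := by
  constructor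
  · intro h
    exact SimpleGraph.Reachable.map ⟨Subtype.val, fun hadj => hadj⟩ h
  · intro h
    exact reachable_pullback Subtype.val_injective (fun _ _ => Iff.rfl) (subgraph_h2' K) h

lemma span_reach_mem_verts (K : G₀.Subgraph) {x w : α}
    (h : K.spanningCoe.Reachable x w) (hw : w ∈ K.verts) : x ∈ K.verts := by
  obtain ⟨p⟩ := h
  cases p with
  | nil => exact hw
  | cons h q => exact K.edge_vert h

lemma span_reach_set (K : G₀.Subgraph) {w : α} (hw : w ∈ K.verts) :
    {x | K.spanningCoe.Reachable x w} =
      Subtype.val '' {u : K.verts | K.coe.Reachable u ⟨w, hw⟩} := by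
  ext x
  constructor
  · intro hx
    exact ⟨⟨x, span_reach_mem_verts K hx hw⟩, (subgraph_reach_iff K _ _).2 hx, rfl⟩
  · rintro ⟨u, hu, rfl⟩
    exact (subgraph_reach_iff K _ _).1 hu

lemma ncard_val_preimage [Finite α] (K : G₀.Subgraph) (Y : Set α) :
    (Subtype.val ⁻¹' Y : Set K.verts).ncard = (Y ∩ K.verts).ncard := by
  rw [← Set.ncard_image_of_injective _ Subtype.val_injective,
    Set.image_preimage_eq_inter_range, Subtype.range_coe]

end SubgraphTransport

section FVCCombine

variable {α : Type*}

lemma restrict_restrict_eq {G : SimpleGraph α} {S T : Set α} (h : T ⊆ S) :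
    graphRestrict (graphRestrict G S) T = graphRestrict G T := by
  ext u v
  constructor
  · rintro ⟨⟨hG, -, -⟩, ht1, ht2⟩
    exact ⟨hG, ht1, ht2⟩
  · rintro ⟨hG, ht1, ht2⟩
    exact ⟨⟨hG, h ht1, h ht2⟩, ht1, ht2⟩

lemma walk_from_F1 {G : SimpleGraph α} {F1 F2 : Set α} :
    ∀ {a b : α} (p : (graphRestrict G (F1 ∪ F2)).Walk a b), a ∈ F1 →
      (∀ v ∈ p.support, v ∈ F1) ∨
      ∃ x y, ∃ q : (graphRestrict G (F1 ∪ F2)).Walk y b,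
        (graphRestrict G F1).Reachable a x ∧ x ∈ F1 ∧ y ∈ F2 ∧ G.Adj x y ∧
          q.length < p.length := by
  intro a b p
  induction p with
  | nil =>
    intro ha
    left
    intro v hv
    rw [SimpleGraph.Walk.support_nil, List.mem_singleton] at hv
    subst hv; exact ha
  | @cons a c b h q ih =>
    intro ha
    by_cases hc2 : c ∈ F2
    · right
      refine ⟨a, c, q, SimpleGraph.Reachable.refl a, ha, hc2, h.1, ?_⟩
      rw [SimpleGraph.Walk.length_cons]
      exact Nat.lt_succ_self _
    · have hc1 : c ∈ F1 := h.2.2.resolve_right hc2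
      rcases ih hc1 with hall | ⟨x, y, q', hr, hx, hy, hadj, hlen⟩
      · left
        intro v hv
        rw [SimpleGraph.Walk.support_cons, List.mem_cons] at hv
        rcases hv with rfl | hv
        · exact ha
        · exact hall v hv
      · right
        refine ⟨x, y, q', ?_, hx, hy, hadj, ?_⟩
        · exact (SimpleGraph.Adj.reachable (⟨h.1, ha, hc1⟩ : (graphRestrict G F1).Adj a c)).trans hr
        · rw [SimpleGraph.Walk.length_cons]
          omega

lemma walk_F2_reach {G : SimpleGraph α} {C1 F1 F2 : Set α}
    (cut1 : ∀ u₁ u₂ w₁ w₂ : α, u₁ ∈ F1 → u₂ ∈ F1 →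
      (graphRestrict G F1).Reachable u₁ u₂ →
      w₁ ∉ C1 ∪ F1 → w₂ ∉ C1 ∪ F1 → G.Adj u₁ w₁ → G.Adj u₂ w₂ →
      u₁ = u₂ ∧ w₁ = w₂)
    (hF2C : ∀ x ∈ F2, x ∉ C1 ∪ F1)
    (hdisjF : Disjoint F1 F2) :
    ∀ (n : ℕ) {a b : α} (p : (graphRestrict G (F1 ∪ F2)).Walk a b),
      p.length ≤ n → a ∈ F2 → b ∈ F2 → (graphRestrict G F2).Reachable a b := by
  intro n
  induction n with
  | zero =>
    intro a b p hlen _ _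
    have := SimpleGraph.Walk.eq_of_length_eq_zero (Nat.le_zero.1 hlen)
    subst this
    exact SimpleGraph.Reachable.refl _
  | succ n ih =>
    intro a b p hlen ha hb
    cases p with
    | nil => exact SimpleGraph.Reachable.refl _
    | @cons a c b h q =>
      rw [SimpleGraph.Walk.length_cons] at hlen
      by_cases hc2 : c ∈ F2
      · exact (SimpleGraph.Adj.reachable (⟨h.1, ha, hc2⟩ : (graphRestrict G F2).Adj a c)).trans
          (ih q (by omega) hc2 hb)
      · have hc1 : c ∈ F1 := h.2.2.resolve_right hc2
        rcases walk_from_F1 q hc1 with hall | ⟨x, y, q', hr, hx, hy, hadj, hlq⟩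
        · exact absurd (hall b q.end_mem_support)
            (fun hbF1 => (Set.disjoint_left.1 hdisjF hbF1) hb)
        · have heq := cut1 c x a y hc1 hx hr (hF2C a ha) (hF2C y hy) h.1.symm hadj
          obtain ⟨-, rfl⟩ := heq
          exact ih q' (by omega) ha hb

lemma combined_forest_acyclic {G : SimpleGraph α} {C1 F1 F2 : Set α}
    (acF1 : (graphRestrict G F1).IsAcyclic) (acF2 : (graphRestrict G F2).IsAcyclic)
    (cut1 : ∀ u₁ u₂ w₁ w₂ : α, u₁ ∈ F1 → u₂ ∈ F1 →
      (graphRestrict G F1).Reachable u₁ u₂ →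
      w₁ ∉ C1 ∪ F1 → w₂ ∉ C1 ∪ F1 → G.Adj u₁ w₁ → G.Adj u₂ w₂ →
      u₁ = u₂ ∧ w₁ = w₂)
    (hF2C : ∀ x ∈ F2, x ∉ C1 ∪ F1)
    (hdisjF : Disjoint F1 F2) :
    (graphRestrict G (F1 ∪ F2)).IsAcyclic := by
  classical
  intro v c hc
  have hmem : ∀ x ∈ c.support, x ∈ F1 ∪ F2 := by
    cases c with
    | nil => exact (hc.ne_nil rfl).elim
    | cons h q =>
      intro x hx
      rw [SimpleGraph.Walk.support_cons, List.mem_cons] at hx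
      rcases hx with rfl | hx
      · exact h.2.1
      · exact restrict_walk_support q h.2.1 x hx
  by_cases hall1 : ∀ x ∈ c.support, x ∈ F1
  · have hcond := walk_edges_transfer (B := graphRestrict G F1) c
      (fun x y hxy hx hy => ⟨hxy.1, hall1 x hx, hall1 y hy⟩)
    exact acF1 (c.transfer _ hcond) (hc.transfer hcond)
  by_cases hall2 : ∀ x ∈ c.support, x ∈ F2
  · have hcond := walk_edges_transfer (B := graphRestrict G F2) c
      (fun x y hxy hx hy => ⟨hxy.1, hall2 x hx, hall2 y hy⟩)
    exact acF2 (c.transfer _ hcond) (hc.transfer hcond)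
  push_neg at hall1 hall2
  obtain ⟨x1, hx1s, hx1⟩ := hall1
  obtain ⟨x2, hx2s, hx2⟩ := hall2
  have hx1F2 : x1 ∈ F2 := (hmem x1 hx1s).resolve_left hx1
  have hx2F1 : x2 ∈ F1 := (hmem x2 hx2s).resolve_right hx2
  have hx2tail : x2 ∈ c.support.tail := by
    cases c with
    | nil => exact (hc.ne_nil rfl).elim
    | cons h q =>
      rw [SimpleGraph.Walk.support_cons, List.mem_cons] at hx2s
      rw [SimpleGraph.Walk.support_cons, List.tail_cons]
      rcases hx2s with rfl | hx
      · exact q.end_mem_support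
      · exact hx
  set d := c.rotate x1 hx1s with hddef
  have hd : d.IsCycle := hc.rotate hx1s
  have hx2d : x2 ∈ d.support := by
    have hperm := SimpleGraph.Walk.support_rotate c x1 hx1s
    have : x2 ∈ d.support.tail := hperm.mem_iff.mpr hx2tail
    exact List.mem_of_mem_tail this
  have hTF1 : {y | (graphRestrict G F1).Reachable y x2} ⊆ F1 :=
    fun y hy => restrict_reachable_mem hy hx2F1
  have hx1T : x1 ∉ {y | (graphRestrict G F1).Reachable y x2} :=
    fun hT => (Set.disjoint_left.1 hdisjF (hTF1 hT)) hx1F2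
  have hx2T : x2 ∈ {y | (graphRestrict G F1).Reachable y x2} := SimpleGraph.Reachable.refl _
  have hspec : (d.takeUntil x2 hx2d).append (d.dropUntil x2 hx2d) = d := d.take_spec hx2d
  obtain ⟨u1, w1, hu1T, hw1T, hadj1, he1⟩ :=
    exists_cross_edge (d.takeUntil x2 hx2d) hx1T hx2T
  obtain ⟨u2, w2, hu2T, hw2T, hadj2, he2⟩ :=
    exists_cross_edge (d.dropUntil x2 hx2d).reverse hx1T hx2T
  rw [SimpleGraph.Walk.edges_reverse, List.mem_reverse] at he2
  have hwF2 : ∀ u w, u ∈ {y | (graphRestrict G F1).Reachable y x2} →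
      w ∉ {y | (graphRestrict G F1).Reachable y x2} →
      (graphRestrict G (F1 ∪ F2)).Adj u w → w ∈ F2 := by
    intro u w huT hwT hadj
    rcases hadj.2.2 with hw1 | hw2
    · exact absurd ((SimpleGraph.Adj.reachable
        (SimpleGraph.Adj.symm (G := graphRestrict G F1) ⟨hadj.1, hTF1 huT, hw1⟩)).trans huT) hwT
    · exact hw2
  have hw1F2 := hwF2 u1 w1 hu1T hw1T hadj1
  have hw2F2 := hwF2 u2 w2 hu2T hw2T hadj2
  have hcut := cut1 u1 u2 w1 w2 (hTF1 hu1T) (hTF1 hu2T) (hu1T.trans hu2T.symm)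
    (hF2C w1 hw1F2) (hF2C w2 hw2F2) hadj1.1 hadj2.1
  obtain ⟨rfl, rfl⟩ := hcut
  have hnodup : d.edges.Nodup := hd.isCircuit.isTrail.edges_nodup
  rw [← hspec, SimpleGraph.Walk.edges_append] at hnodup
  exact (List.nodup_append.1 hnodup).2.2 _ he1 _ he2 rfl

end FVCCombine

section CutCombine

variable {α : Type*}

lemma combined_cut {G : SimpleGraph α} {C1 F1 C2 F2 : Set α}
    (cut1 : ∀ u₁ u₂ w₁ w₂ : α, u₁ ∈ F1 → u₂ ∈ F1 →
      (graphRestrict G F1).Reachable u₁ u₂ →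
      w₁ ∉ C1 ∪ F1 → w₂ ∉ C1 ∪ F1 → G.Adj u₁ w₁ → G.Adj u₂ w₂ →
      u₁ = u₂ ∧ w₁ = w₂)
    (cut2 : ∀ u₁ u₂ w₁ w₂ : α, u₁ ∈ F2 → u₂ ∈ F2 →
      (graphRestrict (graphRestrict G (C1 ∪ F1)ᶜ) F2).Reachable u₁ u₂ →
      w₁ ∉ C2 ∪ F2 → w₂ ∉ C2 ∪ F2 →
      (graphRestrict G (C1 ∪ F1)ᶜ).Adj u₁ w₁ → (graphRestrict G (C1 ∪ F1)ᶜ).Adj u₂ w₂ →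
      u₁ = u₂ ∧ w₁ = w₂)
    (hF2C : ∀ x ∈ F2, x ∉ C1 ∪ F1)
    (hdisjF : Disjoint F1 F2) :
    ∀ u₁ u₂ w₁ w₂ : α, u₁ ∈ F1 ∪ F2 → u₂ ∈ F1 ∪ F2 →
      (graphRestrict G (F1 ∪ F2)).Reachable u₁ u₂ →
      w₁ ∉ (C1 ∪ C2) ∪ (F1 ∪ F2) → w₂ ∉ (C1 ∪ C2) ∪ (F1 ∪ F2) →
      G.Adj u₁ w₁ → G.Adj u₂ w₂ → u₁ = u₂ ∧ w₁ = w₂ := by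
  have hsplit : ∀ w, w ∉ (C1 ∪ C2) ∪ (F1 ∪ F2) →
      w ∉ C1 ∪ F1 ∧ w ∉ C2 ∪ F2 ∧ w ∉ F2 := by
    intro w hw
    simp only [Set.mem_union, not_or] at hw ⊢
    tauto
  intro u₁ u₂ w₁ w₂ hu1 hu2 hreach hw1 hw2 ha1 ha2
  obtain ⟨hw1a, hw1b, hw1c⟩ := hsplit w₁ hw1
  obtain ⟨hw2a, hw2b, hw2c⟩ := hsplit w₂ hw2
  rcases hu1 with hu1F1 | hu1F2
  · obtain ⟨p⟩ := hreach
    rcases walk_from_F1 p hu1F1 with hall | ⟨x, y, q', hr, hx, hy, hadj, -⟩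
    · rcases hu2 with hu2F1 | hu2F2
      · have hcond := walk_edges_transfer (B := graphRestrict G F1) p
          (fun a b hab hsa hsb => ⟨hab.1, hall a hsa, hall b hsb⟩)
        exact cut1 u₁ u₂ w₁ w₂ hu1F1 hu2F1 ⟨p.transfer _ hcond⟩ hw1a hw2a ha1 ha2
      · exact absurd (hall u₂ p.end_mem_support)
          (fun h => (Set.disjoint_left.1 hdisjF h) hu2F2)
    · have hcc := cut1 u₁ x w₁ y hu1F1 hx hr hw1a (hF2C y hy) ha1 hadj
      exact absurd (by rw [hcc.2]; exact hy) hw1c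
  · rcases hu2 with hu2F1 | hu2F2
    · obtain ⟨p⟩ := hreach.symm
      rcases walk_from_F1 p hu2F1 with hall | ⟨x, y, q', hr, hx, hy, hadj, -⟩
      · exact absurd (hall u₁ p.end_mem_support)
          (fun h => (Set.disjoint_left.1 hdisjF h) hu1F2)
      · have hcc := cut1 u₂ x w₂ y hu2F1 hx hr hw2a (hF2C y hy) ha2 hadj
        exact absurd (by rw [hcc.2]; exact hy) hw2c
    · obtain ⟨p⟩ := hreach
      have hrF2 : (graphRestrict G F2).Reachable u₁ u₂ :=
        walk_F2_reach cut1 hF2C hdisjF p.length p le_rfl hu1F2 hu2F2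
      have heq := restrict_restrict_eq (G := G) (S := (C1 ∪ F1)ᶜ) (T := F2)
        (fun x hx => hF2C x hx)
      exact cut2 u₁ u₂ w₁ w₂ hu1F2 hu2F2 (by rw [heq]; exact hrF2) hw1b hw2b
        ⟨ha1, hF2C _ hu1F2, hw1a⟩ ⟨ha2, hF2C _ hu2F2, hw2a⟩

lemma side_comp [Finite α] {A B : SimpleGraph α} {VA VB CB : Set α} (CA : Set α) {vV : α} {z : ℕ}
    (hAe : ∀ ⦃x y⦄, A.Adj x y → x ∈ VA ∧ y ∈ VA)
    (hBe : ∀ ⦃x y⦄, B.Adj x y → x ∈ VB ∧ y ∈ VB)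
    (hdisjV : Disjoint VA VB)
    (hCB : CB ⊆ VB)
    (hv : vV ∈ VA)
    (hcert : fvs (graphRestrict A {x | A.Reachable x vV}) =
        (CA ∩ {x | A.Reachable x vV}).ncard ∧
      (CA ∩ {x | A.Reachable x vV}).ncard ≤ z) :
    fvs (graphRestrict (A ⊔ B) {x | (A ⊔ B).Reachable x vV}) =
      ((CA ∪ CB) ∩ {x | (A ⊔ B).Reachable x vV}).ncard ∧
      ((CA ∪ CB) ∩ {x | (A ⊔ B).Reachable x vV}).ncard ≤ z := by
  have hBe' : ∀ ⦃x y⦄, B.Adj x y → x ∉ VA :=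
    fun x y h hx => Set.disjoint_left.1 hdisjV hx (hBe h).1
  have hS : {x | (A ⊔ B).Reachable x vV} = {x | A.Reachable x vV} := by
    ext x
    simp only [Set.mem_setOf_eq]
    constructor
    · intro hx
      exact (sup_reachable_left hAe hBe' hx.symm hv).symm
    · intro hx
      exact hx.mono le_sup_left
  have hSsub : {x | A.Reachable x vV} ⊆ VA := by
    intro x hx
    obtain ⟨p⟩ := hx
    cases p with
    | nil => exact hv
    | cons h q => exact (hAe h).1
  have hG : graphRestrict (A ⊔ B) {x | A.Reachable x vV} =
      graphRestrict A {x | A.Reachable x vV} := by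
    ext u v
    constructor
    · rintro ⟨h, hu, hv'⟩
      rcases (SimpleGraph.sup_adj _ _ _ _).1 h with h' | h'
      · exact ⟨h', hu, hv'⟩
      · exact ((hBe' h') (hSsub hu)).elim
    · rintro ⟨h, hu, hv'⟩
      exact ⟨(SimpleGraph.sup_adj _ _ _ _).2 (Or.inl h), hu, hv'⟩
  have hCBS : (CA ∪ CB) ∩ {x | A.Reachable x vV} = CA ∩ {x | A.Reachable x vV} := by
    ext x
    constructor
    · rintro ⟨hc | hc, hs⟩
      · exact ⟨hc, hs⟩
      · exact ((Set.disjoint_left.1 hdisjV (hSsub hs)) (hCB hc)).elim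
    · rintro ⟨hc, hs⟩
      exact ⟨Or.inl hc, hs⟩
  rw [hS, hG, hCBS]
  exact hcert

end CutCombine

section CertTransport

variable {α : Type*} {G₀ : SimpleGraph α}

lemma cert_fvs_eq [Finite α] (K : G₀.Subgraph) {w : α} (hw : w ∈ K.verts) :
    fvs (graphRestrict K.coe {u | K.coe.Reachable u ⟨w, hw⟩}) =
      fvs (graphRestrict K.spanningCoe {x | K.spanningCoe.Reachable x w}) := by
  rw [subgraph_fvs_restrict K _, ← span_reach_set K hw]

lemma cert_ncard_eq [Finite α] (K : G₀.Subgraph) {CK : Set α} (hCK : CK ⊆ K.verts)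
    {w : α} (hw : w ∈ K.verts) :
    ({u : K.verts | (u : α) ∈ CK} ∩ {u | K.coe.Reachable u ⟨w, hw⟩}).ncard =
      (CK ∩ {x | K.spanningCoe.Reachable x w}).ncard := by
  have himg : Subtype.val '' ({u : K.verts | (u : α) ∈ CK} ∩ {u | K.coe.Reachable u ⟨w, hw⟩}) =
      CK ∩ {x | K.spanningCoe.Reachable x w} := by
    rw [Set.image_inter Subtype.val_injective]
    have h1 : Subtype.val '' {u : K.verts | (u : α) ∈ CK} = CK := by
      have : {u : K.verts | (u : α) ∈ CK} = Subtype.val ⁻¹' CK := rfl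
      rw [this, Set.image_preimage_eq_inter_range, Subtype.range_coe,
        Set.inter_eq_self_of_subset_left hCK]
    rw [h1, ← span_reach_set K hw]
  rw [← himg, Set.ncard_image_of_injective _ Subtype.val_injective]

end CertTransport

section Compose

variable {α : Type*}

lemma val_image_mem_set {G₀ : SimpleGraph α} {K : G₀.Subgraph} {CK : Set α}
    (h : CK ⊆ K.verts) :
    Subtype.val '' {u : K.verts | (u : α) ∈ CK} = CK := by
  show Subtype.val '' (Subtype.val ⁻¹' CK) = CK
  rw [Set.image_preimage_eq_inter_range, Subtype.range_coe,
    Set.inter_eq_self_of_subset_left h]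

lemma restrict_inter_eq {A : SimpleGraph α} {Y W : Set α}
    (hA : ∀ ⦃x y⦄, A.Adj x y → x ∈ W ∧ y ∈ W) :
    graphRestrict A (Y ∩ W)ᶜ = graphRestrict A Yᶜ := by
  ext u v
  constructor
  · rintro ⟨h, hu, hv⟩
    exact ⟨h, fun hY => hu ⟨hY, (hA h).1⟩, fun hY => hv ⟨hY, (hA h).2⟩⟩
  · rintro ⟨h, hu, hv⟩
    exact ⟨h, fun hY => hu hY.1, fun hY => hv hY.1⟩

lemma compose [Fintype α] (G : SimpleGraph α) (z : ℕ) (C1 F1 C2 F2 : Set α)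
    (hdisj : Disjoint (C1 ∪ F1) (C2 ∪ F2))
    (h1 : IsZAntler G z C1 F1)
    (h2 : IsZAntler (graphRestrict G (C1 ∪ F1)ᶜ) z C2 F2) :
    IsZAntler G z (C1 ∪ C2) (F1 ∪ F2) := by
  classical
  obtain ⟨⟨⟨hd1, acF1, cut1⟩, -⟩, H1, hH1v, ⟨⟨hC1v, minFVS1⟩, cert1⟩⟩ := h1
  obtain ⟨⟨⟨hd2, acF2', cut2⟩, -⟩, H2, hH2v, ⟨⟨hC2v, minFVS2⟩, cert2⟩⟩ := h2
  have hF2C : ∀ x ∈ F2, x ∉ C1 ∪ F1 := fun x hx h => Set.disjoint_left.1 hdisj h (Or.inr hx)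
  have hC2C : ∀ x ∈ C2, x ∉ C1 ∪ F1 := fun x hx h => Set.disjoint_left.1 hdisj h (Or.inl hx)
  have hdisjF : Disjoint F1 F2 := by
    rw [Set.disjoint_left]
    intro x hx hx2
    exact hF2C x hx2 (Or.inr hx)
  have hdC : Disjoint C1 C2 := by
    rw [Set.disjoint_left]
    intro x hx hx2
    exact hC2C x hx2 (Or.inl hx)
  have hF2sub : F2 ⊆ (C1 ∪ F1)ᶜ := fun x hx => hF2C x hx
  have acF2 : (graphRestrict G F2).IsAcyclic := by
    rw [← restrict_restrict_eq hF2sub]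
    exact acF2'
  have hdisjCF : Disjoint (C1 ∪ C2) (F1 ∪ F2) := by
    rw [Set.disjoint_left]
    rintro x (hx | hx) (hf | hf)
    · exact Set.disjoint_left.1 hd1 hx hf
    · exact Set.disjoint_left.1 hdisj (Or.inl hx) (Or.inr hf)
    · exact Set.disjoint_left.1 hdisj (Or.inr hf) (Or.inl hx)
    · exact Set.disjoint_left.1 hd2 hx hf
  have hFVC : IsFVC G (C1 ∪ C2) (F1 ∪ F2) :=
    ⟨hdisjCF, combined_forest_acyclic acF1 acF2 cut1 hF2C hdisjF,
      combined_cut cut1 cut2 hF2C hdisjF⟩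
  -- certificate assembly
  set H2' : G.Subgraph :=
    { verts := H2.verts
      Adj := H2.Adj
      adj_sub := fun h => (H2.adj_sub h).1
      edge_vert := fun h => H2.edge_vert h
      symm := H2.symm } with hH2'def
  set Hc := H1 ⊔ H2' with hHdef
  have minFVS2' : IsMinFVS H2'.coe {u : H2'.verts | (u : α) ∈ C2} := minFVS2
  have cert2' : HasCertOrder H2'.coe {u : H2'.verts | (u : α) ∈ C2} z := cert2
  have hV2sub : H2'.verts ⊆ C2 ∪ F2 := hH2v
  have hdV : Disjoint H1.verts H2'.verts := hdisj.mono hH1v hV2sub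
  have hvertsU : Hc.verts = H1.verts ∪ H2'.verts := SimpleGraph.Subgraph.verts_sup H1 H2'
  have hvertsub : Hc.verts ⊆ (C1 ∪ C2) ∪ (F1 ∪ F2) := by
    rw [hvertsU]
    rintro x (hx | hx)
    · rcases hH1v hx with h | h
      · exact Or.inl (Or.inl h)
      · exact Or.inr (Or.inl h)
    · rcases hV2sub hx with h | h
      · exact Or.inl (Or.inr h)
      · exact Or.inr (Or.inr h)
  have hCsub : C1 ∪ C2 ⊆ Hc.verts := by
    rw [hvertsU]
    rintro x (hx | hx)
    · exact Or.inl (hC1v hx)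
    · exact Or.inr (hC2v hx)
  have hspan : Hc.spanningCoe = H1.spanningCoe ⊔ H2'.spanningCoe := by
    ext u v
    simp only [SimpleGraph.Subgraph.spanningCoe_adj, SimpleGraph.sup_adj, hHdef,
      SimpleGraph.Subgraph.sup_adj]
  have hAe : ∀ ⦃x y⦄, H1.spanningCoe.Adj x y → x ∈ H1.verts ∧ y ∈ H1.verts :=
    fun x y h => ⟨H1.edge_vert h, H1.edge_vert (H1.adj_symm h)⟩
  have hBe : ∀ ⦃x y⦄, H2'.spanningCoe.Adj x y → x ∈ H2'.verts ∧ y ∈ H2'.verts :=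
    fun x y h => ⟨H2'.edge_vert h, H2'.edge_vert (H2'.adj_symm h)⟩
  have spanFVS : ∀ (K : G.Subgraph) (CK : Set α), CK ⊆ K.verts →
      IsMinFVS K.coe {u : K.verts | (u : α) ∈ CK} → IsFVS K.spanningCoe CK := by
    intro K CK hsub hmin
    have h := (subgraph_isFVS_iff K {u : K.verts | (u : α) ∈ CK}).1 hmin.1
    rwa [val_image_mem_set hsub] at h
  have hFVS1 : IsFVS H1.spanningCoe C1 := spanFVS H1 C1 hC1v minFVS1
  have hFVS2 : IsFVS H2'.spanningCoe C2 := spanFVS H2' C2 hC2v minFVS2'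
  have hFVSspan : IsFVS Hc.spanningCoe (C1 ∪ C2) := by
    unfold IsFVS
    rw [hspan]
    have hdistr : graphRestrict (H1.spanningCoe ⊔ H2'.spanningCoe) (C1 ∪ C2)ᶜ =
        graphRestrict H1.spanningCoe (C1 ∪ C2)ᶜ ⊔ graphRestrict H2'.spanningCoe (C1 ∪ C2)ᶜ := by
      ext u v
      constructor
      · rintro ⟨h, hu, hv⟩
        rcases (SimpleGraph.sup_adj _ _ _ _).1 h with h' | h'
        · exact (SimpleGraph.sup_adj _ _ _ _).2 (Or.inl ⟨h', hu, hv⟩)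
        · exact (SimpleGraph.sup_adj _ _ _ _).2 (Or.inr ⟨h', hu, hv⟩)
      · intro h
        rcases (SimpleGraph.sup_adj _ _ _ _).1 h with ⟨h', hu, hv⟩ | ⟨h', hu, hv⟩
        · exact ⟨(SimpleGraph.sup_adj _ _ _ _).2 (Or.inl h'), hu, hv⟩
        · exact ⟨(SimpleGraph.sup_adj _ _ _ _).2 (Or.inr h'), hu, hv⟩
    rw [hdistr]
    apply sup_acyclic_sep (S := H1.verts)
    · intro x y h
      exact hAe h.1
    · intro x y h
      exact ⟨fun hx => Set.disjoint_left.1 hdV hx (hBe h.1).1,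
        fun hy => Set.disjoint_left.1 hdV hy (hBe h.1).2⟩
    · refine acyclic_anti ?_ hFVS1
      intro u v h
      exact ⟨h.1, fun hc => h.2.1 (Or.inl hc), fun hc => h.2.2 (Or.inl hc)⟩
    · refine acyclic_anti ?_ hFVS2
      intro u v h
      exact ⟨h.1, fun hc => h.2.1 (Or.inr hc), fun hc => h.2.2 (Or.inr hc)⟩
  have hFVScoe : IsFVS Hc.coe {u : Hc.verts | (u : α) ∈ C1 ∪ C2} := by
    rw [subgraph_isFVS_iff, val_image_mem_set hCsub]
    exact hFVSspan
  have hmin : ∀ Y : Set Hc.verts, IsFVS Hc.coe Y →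
      ({u : Hc.verts | (u : α) ∈ C1 ∪ C2}).ncard ≤ Y.ncard := by
    intro Y hY
    have hYspan : IsFVS Hc.spanningCoe (Subtype.val '' Y) := (subgraph_isFVS_iff Hc Y).1 hY
    rw [hspan] at hYspan
    have hY1 : IsFVS H1.spanningCoe (Subtype.val '' Y) := isFVS_anti le_sup_left hYspan
    have hY2 : IsFVS H2'.spanningCoe (Subtype.val '' Y) := isFVS_anti le_sup_right hYspan
    have part : ∀ (K : G.Subgraph) (CK : Set α), CK ⊆ K.verts →
        IsMinFVS K.coe {u : K.verts | (u : α) ∈ CK} →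
        (∀ ⦃x y⦄, K.spanningCoe.Adj x y → x ∈ K.verts ∧ y ∈ K.verts) →
        IsFVS K.spanningCoe (Subtype.val '' Y) →
        CK.ncard ≤ ((Subtype.val '' Y) ∩ K.verts).ncard := by
      intro K CK hsub hminK hKe hKY
      have hYK : IsFVS K.spanningCoe ((Subtype.val '' Y) ∩ K.verts) := by
        unfold IsFVS
        rw [restrict_inter_eq hKe]
        exact hKY
      have hpre : IsFVS K.coe (Subtype.val ⁻¹' (Subtype.val '' Y)) := by
        rw [subgraph_isFVS_iff, Set.image_preimage_eq_inter_range, Subtype.range_coe]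
        exact hYK
      have hle := hminK.2 _ hpre
      calc CK.ncard = ({u : K.verts | (u : α) ∈ CK}).ncard := by
            rw [show {u : K.verts | (u : α) ∈ CK} = Subtype.val ⁻¹' CK from rfl,
              ncard_val_preimage, Set.inter_eq_self_of_subset_left hsub]
        _ ≤ (Subtype.val ⁻¹' (Subtype.val '' Y) : Set K.verts).ncard := hle
        _ = ((Subtype.val '' Y) ∩ K.verts).ncard := ncard_val_preimage K _
    have h1le := part H1 C1 hC1v minFVS1 hAe hY1
    have h2le := part H2' C2 hC2v minFVS2' hBe hY2
    have hCcard : ({u : Hc.verts | (u : α) ∈ C1 ∪ C2}).ncard = C1.ncard + C2.ncard := by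
      rw [show {u : Hc.verts | (u : α) ∈ C1 ∪ C2} = Subtype.val ⁻¹' (C1 ∪ C2) from rfl,
        ncard_val_preimage, Set.inter_eq_self_of_subset_left hCsub,
        Set.ncard_union_eq hdC (Set.toFinite _) (Set.toFinite _)]
    have hdint : Disjoint ((Subtype.val '' Y) ∩ H1.verts) ((Subtype.val '' Y) ∩ H2'.verts) :=
      hdV.mono Set.inter_subset_right Set.inter_subset_right
    have hsum : ((Subtype.val '' Y) ∩ H1.verts).ncard + ((Subtype.val '' Y) ∩ H2'.verts).ncard ≤
        (Subtype.val '' Y).ncard := by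
      rw [← Set.ncard_union_eq hdint (Set.toFinite _) (Set.toFinite _)]
      refine Set.ncard_le_ncard ?_ (Set.toFinite _)
      rintro x (⟨hx, -⟩ | ⟨hx, -⟩) <;> exact hx
    have hYcard : (Subtype.val '' Y).ncard = Y.ncard :=
      Set.ncard_image_of_injective _ Subtype.val_injective
    omega
  have hCcard2 : ({u : Hc.verts | (u : α) ∈ C1 ∪ C2}).ncard = (C1 ∪ C2).ncard := by
    rw [show {u : Hc.verts | (u : α) ∈ C1 ∪ C2} = Subtype.val ⁻¹' (C1 ∪ C2) from rfl,
      ncard_val_preimage, Set.inter_eq_self_of_subset_left hCsub]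
  have hAntlerIneq : (C1 ∪ C2).ncard ≤ fvs (graphRestrict G ((C1 ∪ C2) ∪ (F1 ∪ F2))) := by
    have hle : Hc.spanningCoe ≤ graphRestrict G ((C1 ∪ C2) ∪ (F1 ∪ F2)) := by
      intro u v h
      exact ⟨Hc.adj_sub h, hvertsub (Hc.edge_vert h), hvertsub (Hc.edge_vert (Hc.adj_symm h))⟩
    calc (C1 ∪ C2).ncard = fvs Hc.coe := by
          rw [isMinFVS_fvs ⟨hFVScoe, hmin⟩, hCcard2]
      _ = fvs Hc.spanningCoe := subgraph_fvs Hc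
      _ ≤ _ := fvs_mono hle
  have hcertord : HasCertOrder Hc.coe {u : Hc.verts | (u : α) ∈ C1 ∪ C2} z := by
    rintro ⟨vv, hvv⟩
    rw [cert_fvs_eq Hc hvv, cert_ncard_eq Hc hCsub hvv, hspan]
    have hvv' : vv ∈ H1.verts ∪ H2'.verts := by rw [← hvertsU]; exact hvv
    rcases hvv' with hv1 | hv2
    · refine side_comp C1 hAe hBe hdV hC2v hv1 ?_
      have hc := cert1 ⟨vv, hv1⟩
      rwa [cert_fvs_eq H1 hv1, cert_ncard_eq H1 hC1v hv1] at hc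
    · rw [sup_comm, Set.union_comm C1 C2]
      refine side_comp C2 hBe hAe hdV.symm hC1v hv2 ?_
      have hc := cert2' ⟨vv, hv2⟩
      rwa [cert_fvs_eq H2' hv2, cert_ncard_eq H2' hC2v hv2] at hc
  exact ⟨⟨hFVC, hAntlerIneq⟩, Hc, hvertsub, ⟨hCsub, hFVScoe, hmin⟩, hcertord⟩

end Compose

lemma isZAntler_empty {α : Type*} (G : SimpleGraph α) (z : ℕ) : IsZAntler G z ∅ ∅ := by
  have hac : (graphRestrict G (∅ : Set α)).IsAcyclic := by
    intro v c hc
    cases c with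
    | nil => exact hc.ne_nil rfl
    | cons h q => exact h.2.1
  have hFVC : IsFVC G ∅ ∅ := by
    refine ⟨disjoint_bot_left, ?_, ?_⟩
    · exact hac
    · intro u₁ u₂ w₁ w₂ h1
      exact (Set.notMem_empty _ h1).elim
  have hSempty : {u : (⊥ : G.Subgraph).verts | (u : α) ∈ (∅ : Set α)} = ∅ :=
    Set.eq_empty_iff_forall_notMem.2 (fun u hu => hu)
  have hbotac : IsFVS (⊥ : G.Subgraph).coe {u : (⊥ : G.Subgraph).verts | (u : α) ∈ (∅ : Set α)} := by
    rintro ⟨vv, hvv⟩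
    rw [SimpleGraph.Subgraph.verts_bot] at hvv
    exact absurd hvv (Set.notMem_empty vv)
  refine ⟨⟨hFVC, ?_⟩, ⊥, ?_, ⟨?_, hbotac, ?_⟩, ?_⟩
  · simp
  · rw [SimpleGraph.Subgraph.verts_bot]
    exact Set.empty_subset _
  · exact Set.empty_subset _
  · intro Y hY
    rw [hSempty, Set.ncard_empty]
    exact Nat.zero_le _
  · rintro ⟨vv, hvv⟩
    rw [SimpleGraph.Subgraph.verts_bot] at hvv
    exact absurd hvv (Set.notMem_empty vv)


theorem stmt14 [Fintype V] (G : SimpleGraph V) (z ℓ : ℕ) (C F : Fin ℓ → Set V)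
    (h : IsAntlerSeq G z ℓ C F) (i : Fin ℓ) :
    IsZAntler G z (⋃ j, ⋃ (_ : j ≤ i), C j) (⋃ j, ⋃ (_ : j ≤ i), F j) := by
  obtain ⟨hCC, hFF, hCF, hseq⟩ := h
  suffices hgen : ∀ n (hn : n < ℓ),
      IsZAntler G z (⋃ j, ⋃ (_ : j ≤ (⟨n, hn⟩ : Fin ℓ)), C j)
        (⋃ j, ⋃ (_ : j ≤ (⟨n, hn⟩ : Fin ℓ)), F j) by
    rcases i with ⟨n, hn⟩
    exact hgen n hn
  intro n
  induction n with
  | zero =>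
    intro hn
    have hg : graphRestrict G (⋃ j, ⋃ (_ : j < (⟨0, hn⟩ : Fin ℓ)), (C j ∪ F j))ᶜ = G := by
      have he : (⋃ j, ⋃ (_ : j < (⟨0, hn⟩ : Fin ℓ)), (C j ∪ F j)) = (∅ : Set V) := by
        ext x
        simp only [Set.mem_iUnion, Set.mem_empty_iff_false, iff_false, not_exists]
        intro j hj
        rw [Fin.lt_def] at hj
        simp only [Fin.val_mk] at hj
        omega
      rw [he, Set.compl_empty, graphRestrict_univ]
    have h0 := hseq ⟨0, hn⟩
    rw [hg] at h0
    have hC0 : (⋃ j, ⋃ (_ : j ≤ (⟨0, hn⟩ : Fin ℓ)), C j) = C ⟨0, hn⟩ := by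
      ext x
      simp only [Set.mem_iUnion]
      constructor
      · rintro ⟨j, hj, hx⟩
        have hje : j = ⟨0, hn⟩ := by
          apply Fin.ext
          rw [Fin.le_def] at hj
          simp only [Fin.val_mk] at hj ⊢
          omega
        rwa [hje] at hx
      · intro hx
        exact ⟨⟨0, hn⟩, le_refl _, hx⟩
    have hF0 : (⋃ j, ⋃ (_ : j ≤ (⟨0, hn⟩ : Fin ℓ)), F j) = F ⟨0, hn⟩ := by
      ext x
      simp only [Set.mem_iUnion]
      constructor
      · rintro ⟨j, hj, hx⟩
        have hje : j = ⟨0, hn⟩ := by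
          apply Fin.ext
          rw [Fin.le_def] at hj
          simp only [Fin.val_mk] at hj ⊢
          omega
        rwa [hje] at hx
      · intro hx
        exact ⟨⟨0, hn⟩, le_refl _, hx⟩
    rw [hC0, hF0]
    exact h0
  | succ n ih =>
    intro hn
    have hn' : n < ℓ := Nat.lt_of_succ_lt hn
    have ihz := ih hn'
    have hstep := hseq ⟨n + 1, hn⟩
    have hgeq : (⋃ j, ⋃ (_ : j < (⟨n + 1, hn⟩ : Fin ℓ)), (C j ∪ F j)) =
        (⋃ j, ⋃ (_ : j ≤ (⟨n, hn'⟩ : Fin ℓ)), C j) ∪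
          (⋃ j, ⋃ (_ : j ≤ (⟨n, hn'⟩ : Fin ℓ)), F j) := by
      ext x
      simp only [Set.mem_iUnion, Set.mem_union]
      constructor
      · rintro ⟨j, hj, hx | hx⟩
        · exact Or.inl ⟨j, by simp only [Fin.le_def, Fin.lt_def, Fin.val_mk] at hj ⊢; omega, hx⟩
        · exact Or.inr ⟨j, by simp only [Fin.le_def, Fin.lt_def, Fin.val_mk] at hj ⊢; omega, hx⟩
      · rintro (⟨j, hj, hx⟩ | ⟨j, hj, hx⟩)
        · exact ⟨j, by simp only [Fin.le_def, Fin.lt_def, Fin.val_mk] at hj ⊢; omega, Or.inl hx⟩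
        · exact ⟨j, by simp only [Fin.le_def, Fin.lt_def, Fin.val_mk] at hj ⊢; omega, Or.inr hx⟩
    rw [hgeq] at hstep
    have hne : ∀ j : Fin ℓ, j ≤ (⟨n, hn'⟩ : Fin ℓ) → j ≠ ⟨n + 1, hn⟩ := by
      intro j hj heq
      rw [Fin.le_def] at hj
      have hv := congrArg Fin.val heq
      simp only [Fin.val_mk] at hv hj
      omega
    have hdisjstep : Disjoint
        ((⋃ j, ⋃ (_ : j ≤ (⟨n, hn'⟩ : Fin ℓ)), C j) ∪
          (⋃ j, ⋃ (_ : j ≤ (⟨n, hn'⟩ : Fin ℓ)), F j))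
        (C ⟨n + 1, hn⟩ ∪ F ⟨n + 1, hn⟩) := by
      rw [Set.disjoint_left]
      intro x hx hx2
      simp only [Set.mem_union, Set.mem_iUnion] at hx hx2
      rcases hx with ⟨j, hj, hx⟩ | ⟨j, hj, hx⟩ <;> rcases hx2 with hx2 | hx2
      · exact Set.disjoint_left.1 (hCC j _ (hne j hj)) hx hx2
      · exact Set.disjoint_left.1 (hCF j _) hx hx2
      · exact Set.disjoint_left.1 (hCF _ j) hx2 hx
      · exact Set.disjoint_left.1 (hFF j _ (hne j hj)) hx hx2
    have hcomp := compose G z _ _ _ _ hdisjstep ihz hstep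
    have hCs : (⋃ j, ⋃ (_ : j ≤ (⟨n, hn'⟩ : Fin ℓ)), C j) ∪ C ⟨n + 1, hn⟩ =
        ⋃ j, ⋃ (_ : j ≤ (⟨n + 1, hn⟩ : Fin ℓ)), C j := by
      ext x
      simp only [Set.mem_union, Set.mem_iUnion]
      constructor
      · rintro (⟨j, hj, hx⟩ | hx)
        · exact ⟨j, by simp only [Fin.le_def, Fin.val_mk] at hj ⊢; omega, hx⟩
        · exact ⟨⟨n + 1, hn⟩, le_refl _, hx⟩
      · rintro ⟨j, hj, hx⟩
        by_cases hje : j = ⟨n + 1, hn⟩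
        · right
          rwa [hje] at hx
        · left
          refine ⟨j, ?_, hx⟩
          simp only [Fin.le_def, Fin.val_mk] at hj ⊢
          have hvne : (j : ℕ) ≠ n + 1 := fun hv => hje (Fin.ext hv)
          omega
    have hFs : (⋃ j, ⋃ (_ : j ≤ (⟨n, hn'⟩ : Fin ℓ)), F j) ∪ F ⟨n + 1, hn⟩ =
        ⋃ j, ⋃ (_ : j ≤ (⟨n + 1, hn⟩ : Fin ℓ)), F j := by
      ext x
      simp only [Set.mem_union, Set.mem_iUnion]
      constructor
      · rintro (⟨j, hj, hx⟩ | hx)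
        · exact ⟨j, by simp only [Fin.le_def, Fin.val_mk] at hj ⊢; omega, hx⟩
        · exact ⟨⟨n + 1, hn⟩, le_refl _, hx⟩
      · rintro ⟨j, hj, hx⟩
        by_cases hje : j = ⟨n + 1, hn⟩
        · right
          rwa [hje] at hx
        · left
          refine ⟨j, ?_, hx⟩
          simp only [Fin.le_def, Fin.val_mk] at hj ⊢
          have hvne : (j : ℕ) ≠ n + 1 := fun hv => hje (Fin.ext hv)
          omega
    rw [hCs, hFs] at hcomp
    exact hcomp
end

section
/- Let G be a finite simple graph and let (C,F) be a 1-antler in G. Then for every vertex c ∈ C, the induced subgraph G[{c} ∪ F] contains a cycle. -/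
variable {V : Type*}

lemma support_subset_of_not_nil {G : SimpleGraph V} {S : Set V} :
    ∀ {u v : V} (w : (graphRestrict G S).Walk u v), ¬ w.Nil →
      ∀ x ∈ w.support, x ∈ S := by
  intro u v w
  induction w with
  | nil => intro h; exact absurd SimpleGraph.Walk.nil_nil h
  | @cons a b c h p ih =>
    intro _ x hx
    rw [SimpleGraph.Walk.support_cons, List.mem_cons] at hx
    rcases hx with rfl | hx
    · exact h.2.1
    · by_cases hp : p.Nil
      · rw [SimpleGraph.Walk.nil_iff_support_eq] at hp
        rw [hp, List.mem_singleton] at hx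
        subst hx; exact h.2.2
      · exact ih hp x hx

lemma walk_edges_sub {G : SimpleGraph V} {S T : Set V} {u v : V}
    (w : (graphRestrict G S).Walk u v) (hsupp : ∀ x ∈ w.support, x ∈ T) :
    ∀ e ∈ w.edges, e ∈ (graphRestrict G T).edgeSet := by
  intro e he
  induction e with
  | h a b =>
    have hadj : (graphRestrict G S).Adj a b := w.adj_of_mem_edges he
    exact ⟨hadj.1, hsupp a (w.fst_mem_support_of_mem_edges he),
      hsupp b (w.snd_mem_support_of_mem_edges he)⟩

theorem stmt17 [Fintype V] (G : SimpleGraph V) (C F : Set V)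
    (h : IsOneAntler G C F) (c : V) (hc : c ∈ C) :
    ∃ (v : V) (w : (graphRestrict G ({c} ∪ F)).Walk v v), w.IsCycle := by
  classical
  haveI : Fintype ↑C := Fintype.ofFinite _
  obtain ⟨⟨_, hacF, _⟩, b, cyc, hcyc, hdisj⟩ := h
  -- each cycle's support lies in C ∪ F
  have hsupp : ∀ i, ∀ x ∈ (cyc i).support, x ∈ C ∪ F := fun i =>
    support_subset_of_not_nil (cyc i) (hcyc i).not_nil
  -- each cycle meets C
  have hne : ∀ i, ∃ x, x ∈ C ∧ x ∈ (cyc i).support := by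
    intro i
    by_contra hcon
    push_neg at hcon
    have hF : ∀ x ∈ (cyc i).support, x ∈ F := by
      intro x hx
      rcases hsupp i x hx with hxC | hxF
      · exact absurd hx (hcon x hxC)
      · exact hxF
    exact hacF _ ((hcyc i).transfer (walk_edges_sub (cyc i) hF))
  choose f hfC hfs using hne
  have hinj : Function.Injective fun i => (⟨f i, hfC i⟩ : C) := by
    intro i j hij
    by_contra hne'
    have := Set.disjoint_left.mp (hdisj i j hne') (hfs i)
    simp only [Subtype.mk.injEq] at hij
    exact this (hij ▸ hfs j)
  have hcard : Fintype.card (Fin C.ncard) = Fintype.card C := by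
    rw [Fintype.card_fin, Set.ncard_eq_toFinset_card', Set.toFinset_card]
  have hbij := (Fintype.bijective_iff_injective_and_card _).mpr ⟨hinj, hcard⟩
  obtain ⟨i, hi⟩ := hbij.2 ⟨c, hc⟩
  simp only [Subtype.mk.injEq] at hi
  -- the support of cycle i lies in {c} ∪ F
  have hsub : ∀ x ∈ (cyc i).support, x ∈ ({c} ∪ F : Set V) := by
    intro x hx
    rcases hsupp i x hx with hxC | hxF
    · obtain ⟨j, hj⟩ := hbij.2 ⟨x, hxC⟩
      simp only [Subtype.mk.injEq] at hj
      have hij : j = i := by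
        by_contra hne'
        exact Set.disjoint_left.mp (hdisj j i hne') (hfs j) (hj ▸ hx)
      left; rw [← hj, hij, hi]; rfl
    · right; exact hxF
  exact ⟨b i, (cyc i).transfer _ (walk_edges_sub (cyc i) hsub),
    (hcyc i).transfer _⟩
end
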